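/- A word w ∈ Y⁺ belongs to U_X if and only if the following three conditions hold: (i) the number of occurrences of λ in w equals the number of occurrences of ρ in w; (ii) in each initial segment (prefix) of w, the number of occurrences of λ is at least as great as the number of occurrences of ρ; (iii) the symbol λ is never immediately followed in w by the symbol ρ. -/

import Mathlib

/-- The opening symbol λ. -/
def lam (X : Type*) : X ⊕ Bool := Sum.inr false

/-- The closing symbol ρ. -/
def rho (X : Type*) : X ⊕ Bool := Sum.inr true

/-- For a word `u`, the word `u⁻¹ = λ u ρ`. -/
def winv {X : Type*} (u : List (X ⊕ Bool)) : List (X ⊕ Bool) :=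
  [lam X] ++ u ++ [rho X]

/-- `U_X`: the least subset of `Y⁺` containing the one-letter words from `X`
and closed under concatenation and `u ↦ u⁻¹`. -/
inductive UX (X : Type*) : List (X ⊕ Bool) → Prop
  | var (x : X) : UX X [Sum.inl x]
  | mul {u v : List (X ⊕ Bool)} : UX X u → UX X v → UX X (u ++ v)
  | inv {u : List (X ⊕ Bool)} : UX X u → UX X (winv u)

/-- Test for the letter λ. -/
def isLam {X : Type*} : X ⊕ Bool → Bool
  | Sum.inr false => true
  | _ => false

/-- Test for the letter ρ. -/
def isRho {X : Type*} : X ⊕ Bool → Bool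
  | Sum.inr true => true
  | _ => false

section Aux

variable {X : Type*}

@[simp] lemma isLam_inl (x : X) : isLam (Sum.inl x) = false := rfl
@[simp] lemma isLam_inr (b : Bool) : isLam (Sum.inr b : X ⊕ Bool) = !b := by cases b <;> rfl
@[simp] lemma isRho_inr (b : Bool) : isRho (Sum.inr b : X ⊕ Bool) = b := by cases b <;> rfl
@[simp] lemma isRho_inl (x : X) : isRho (Sum.inl x) = false := rfl
@[simp] lemma isLam_lam : isLam (lam X) = true := rfl
@[simp] lemma isRho_lam : isRho (lam X) = false := rfl
@[simp] lemma isLam_rho : isLam (rho X) = false := rfl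
@[simp] lemma isRho_rho : isRho (rho X) = true := rfl

/-- condition (ii) -/
def Pcond (w : List (X ⊕ Bool)) : Prop :=
  ∀ p : List (X ⊕ Bool), p <+: w → p.countP isRho ≤ p.countP isLam

lemma UX.ne_nil {w : List (X ⊕ Bool)} (h : UX X w) : w ≠ [] := by
  induction h with
  | var x => simp
  | mul _ _ ih1 ih2 => simp [ih1]
  | inv _ _ => simp [winv]

lemma head_ne_rho {w : List (X ⊕ Bool)} (h2 : Pcond w) :
    ∀ y ∈ w.head?, y ≠ rho X := by
  cases w with
  | nil => simp
  | cons a t =>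
    intro y hy h
    simp only [List.head?_cons, Option.mem_def, Option.some.injEq] at hy
    subst hy; subst h
    have := h2 [rho X] ⟨t, rfl⟩
    simp [List.countP_cons] at this

lemma last_ne_lam {w : List (X ⊕ Bool)}
    (h1 : w.countP isLam = w.countP isRho) (h2 : Pcond w) :
    ∀ x ∈ w.getLast?, x ≠ lam X := by
  intro x hx h
  obtain ⟨u, rfl⟩ := List.getLast?_eq_some_iff.1 hx
  subst h
  have := h2 u ⟨[lam X], rfl⟩
  simp [List.countP_append, List.countP_cons] at h1
  omega

lemma chain'_not_infix {w : List (X ⊕ Bool)}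
    (h : w.Chain' (fun x y => ¬(x = lam X ∧ y = rho X))) :
    ¬ ([lam X, rho X] <:+: w) := by
  rintro ⟨s, t, rfl⟩
  rw [List.append_assoc] at h
  have h' := (List.isChain_append.1 h).2.1
  rw [show ([lam X, rho X] ++ t) = lam X :: (rho X :: t) by rfl, List.isChain_cons] at h'
  exact h'.1 (rho X) rfl ⟨rfl, rfl⟩

lemma UX.fwd {w : List (X ⊕ Bool)} (h : UX X w) :
    w.countP isLam = w.countP isRho ∧ Pcond w ∧
      w.Chain' (fun x y => ¬(x = lam X ∧ y = rho X)) := by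
  induction h with
  | var x =>
    refine ⟨by simp, ?_, List.isChain_singleton _⟩
    intro p hp
    rcases List.sublist_singleton.mp hp.sublist with rfl | rfl <;> simp
  | mul hu hv ihu ihv =>
    obtain ⟨hu1, hu2, hu3⟩ := ihu
    obtain ⟨hv1, hv2, hv3⟩ := ihv
    refine ⟨by simp [List.countP_append]; omega, ?_, ?_⟩
    · intro p hp
      rcases List.prefix_or_prefix_of_prefix hp (List.prefix_append _ _) with h' | h'
      · exact hu2 p h'
      · obtain ⟨q, rfl⟩ := h'
        have hq : q <+: _ := (List.prefix_append_right_inj _).1 hp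
        have := hv2 q hq
        simp [List.countP_append]
        omega
    · refine List.isChain_append.2 ⟨hu3, hv3, ?_⟩
      intro x hx y hy hxy
      exact head_ne_rho hv2 y hy hxy.2
  | inv hu ihu =>
    rename_i u
    obtain ⟨hu1, hu2, hu3⟩ := ihu
    have hwv : winv u = lam X :: (u ++ [rho X]) := by simp [winv]
    refine ⟨by simp [winv, List.countP_append, List.countP_cons]; omega, ?_, ?_⟩
    · intro p hp
      rw [hwv] at hp
      cases p with
      | nil => simp
      | cons a q =>
        rw [List.cons_prefix_cons] at hp
        obtain ⟨rfl, hq⟩ := hp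
        rcases List.prefix_or_prefix_of_prefix hq (List.prefix_append _ _) with h' | h'
        · have := hu2 q h'
          simp [List.countP_cons]
          omega
        · obtain ⟨r, rfl⟩ := h'
          have hr : r <+: [rho X] := (List.prefix_append_right_inj _).1 hq
          have h1 : r.countP isRho ≤ 1 := by
            have := (hr.sublist.countP_le : r.countP isRho ≤ [rho X].countP isRho)
            simpa using this
          simp [List.countP_cons, List.countP_append]
          omega
    · have h' : winv u = [lam X] ++ (u ++ [rho X]) := by simp [winv]
      rw [h']
      refine List.isChain_append.2 ⟨by simp, ?_, ?_⟩
      · refine List.isChain_append.2 ⟨hu3, by simp, ?_⟩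
        intro x hx y hy hxy
        exact last_ne_lam hu1 hu2 x hx hxy.1
      · intro x hx y hy hxy
        rw [List.head?_append_of_ne_nil _ hu.ne_nil] at hy
        exact head_ne_rho hu2 y hy hxy.2

lemma bwd : ∀ (n : ℕ) (w : List (X ⊕ Bool)), w.length ≤ n → w ≠ [] →
    w.countP isLam = w.countP isRho → Pcond w →
    ¬ ([lam X, rho X] <:+: w) → UX X w := by
  intro n
  induction n with
  | zero => intro w hw hne _ _ _; simp [List.length_eq_zero_iff] at hw; exact absurd hw hne
  | succ n ih =>
    intro w hlen hne h1 h2 h3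
    match w with
    | [] => exact absurd rfl hne
    | Sum.inl x :: t =>
      cases t with
      | nil => exact UX.var x
      | cons b s =>
        have h1' : (b :: s).countP isLam = (b :: s).countP isRho := by
          simp only [List.countP_cons, isLam_inl, isRho_inl, Bool.false_eq_true, if_false] at h1 ⊢
          omega
        have h2' : Pcond (b :: s) := by
          intro p hp
          have := h2 (Sum.inl x :: p) (List.cons_prefix_cons.mpr ⟨rfl, hp⟩)
          simpa [List.countP_cons] using this
        have h3' : ¬ ([lam X, rho X] <:+: (b :: s)) := fun hi =>
          h3 (hi.trans (List.suffix_cons _ _).isInfix)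
        have hlen' : (b :: s).length ≤ n := by
          simp only [List.length_cons] at hlen ⊢; omega
        exact UX.mul (UX.var x) (ih (b :: s) hlen' (by simp) h1' h2' h3')
    | Sum.inr true :: t =>
      have := h2 [rho X] ⟨t, rfl⟩
      simp [List.countP_cons] at this
    | Sum.inr false :: t =>
      have hLt : ∀ k, (t.take k).countP isRho ≤ (t.take k).countP isLam + 1 := by
        intro k
        have hp : Sum.inr false :: t.take k <+: Sum.inr false :: t :=
          List.cons_prefix_cons.mpr ⟨rfl, t.take_prefix k⟩
        have := h2 _ hp
        simp [List.countP_cons] at this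
        omega
      have hfull : (t.take t.length).countP isRho = (t.take t.length).countP isLam + 1 := by
        rw [List.take_length]
        simp [List.countP_cons] at h1
        omega
      have hex : ∃ k, (t.take k).countP isRho = (t.take k).countP isLam + 1 :=
        ⟨t.length, hfull⟩
      set m := Nat.find hex with hmdef
      have hm := Nat.find_spec hex
      rw [← hmdef] at hm
      have hmin : ∀ k, k < m → ¬ ((t.take k).countP isRho = (t.take k).countP isLam + 1) :=
        fun k hk => Nat.find_min hex hk
      have hmlen : m ≤ t.length := Nat.find_min' hex hfull
      have hm1 : 1 ≤ m := by
        rcases Nat.eq_zero_or_pos m with h0 | h0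
        · rw [h0] at hm; simp at hm
        · exact h0
      have hlt : m - 1 < t.length := by omega
      have htake : t.take (m-1) ++ [t[m-1]'hlt] = t.take m := by
        have := List.take_concat_get' t (m-1) hlt
        rwa [Nat.sub_add_cancel hm1] at this
      have hprev : (t.take (m-1)).countP isRho ≤ (t.take (m-1)).countP isLam := by
        have ha := hLt (m-1)
        have hb := hmin (m-1) (by omega)
        omega
      have hm' := hm
      rw [← htake, List.countP_append, List.countP_append] at hm'
      have hc : t[m-1]'hlt = rho X := by
        rcases hc' : t[m-1]'hlt with x | b
        · rw [hc'] at hm'; simp at hm'; omega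
        · cases b
          · rw [hc'] at hm'; simp at hm'; omega
          · rfl
      have key : t.take (m-1) ++ [rho X] ++ t.drop m = t := by
        rw [← hc, htake]; exact List.take_append_drop m t
      have hwdec : Sum.inr false :: t = winv (t.take (m-1)) ++ t.drop m := by
        have h' : winv (t.take (m-1)) ++ t.drop m
            = [lam X] ++ (t.take (m-1) ++ [rho X] ++ t.drop m) := by
          simp [winv]
        rw [h', key]; rfl
      rw [hc] at hm'
      simp at hm'
      have hu1 : (t.take (m-1)).countP isLam = (t.take (m-1)).countP isRho := by omega
      have hune : t.take (m-1) ≠ [] := by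
        intro h0
        exact h3 ⟨[], t.drop m, by rw [hwdec, h0]; simp [winv]⟩
      have hu2 : Pcond (t.take (m-1)) := by
        intro p hp
        have hpt : p <+: t := hp.trans (List.take_prefix _ t)
        have hplen : p.length ≤ m - 1 := by
          have := hp.length_le
          rw [List.length_take] at this
          omega
        have hpeq : p = t.take p.length := List.prefix_iff_eq_take.mp hpt
        have ha := hLt p.length
        have hb := hmin p.length (by omega)
        rw [hpeq]
        omega
      have hu3 : ¬ ([lam X, rho X] <:+: t.take (m-1)) := fun hi =>
        h3 (hi.trans ((t.take_prefix (m-1)).isInfix.trans (List.suffix_cons _ t).isInfix))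
      have hulen : (t.take (m-1)).length ≤ n := by
        rw [List.length_take]
        simp only [List.length_cons] at hlen
        omega
      have UXu : UX X (t.take (m-1)) := ih _ hulen hune hu1 hu2 hu3
      by_cases hv : t.drop m = []
      · rw [hwdec, hv, List.append_nil]
        exact UX.inv UXu
      · have h1w := h1
        rw [hwdec] at h1w
        simp [winv, List.countP_append, List.countP_cons] at h1w
        have hv1 : (t.drop m).countP isLam = (t.drop m).countP isRho := by omega
        have hv2 : Pcond (t.drop m) := by
          intro p hp
          have hpre : winv (t.take (m-1)) ++ p <+: Sum.inr false :: t := by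
            rw [hwdec]; exact (List.prefix_append_right_inj _).2 hp
          have := h2 _ hpre
          simp [winv, List.countP_append, List.countP_cons] at this
          omega
        have hv3 : ¬ ([lam X, rho X] <:+: t.drop m) := fun hi =>
          h3 (hi.trans ((List.drop_suffix m t).trans (List.suffix_cons _ t)).isInfix)
        have hvlen : (t.drop m).length ≤ n := by
          rw [List.length_drop]
          simp only [List.length_cons] at hlen
          omega
        have UXv : UX X (t.drop m) := ih (t.drop m) hvlen hv hv1 hv2 hv3
        rw [hwdec]
        exact UX.mul (UX.inv UXu) UXv

end Aux

theorem stmt0 {X : Type*} (w : List (X ⊕ Bool)) (hw : w ≠ []) :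
    UX X w ↔
      (w.countP isLam = w.countP isRho ∧
       (∀ p : List (X ⊕ Bool), p <+: w → p.countP isRho ≤ p.countP isLam) ∧
       ¬ ([lam X, rho X] <:+: w)) := by
  constructor
  · intro h
    obtain ⟨h1, h2, h3⟩ := h.fwd
    exact ⟨h1, h2, chain'_not_infix h3⟩
  · rintro ⟨h1, h2, h3⟩
    exact bwd w.length w le_rfl hw h1 h2 h3
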